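/- For all n ≥ 1, the sum of all coefficients a_{n,i,j} over i, j ≥ 0 equals the double factorial (2n-1)!!. -/

import Mathlib

open MvPolynomial Finset

/-- The Dumont derivation on `ℚ[x,y,z]`: `D x = y*z`, `D y = x*z`, `D z = x*y`. -/
noncomputable def Dum : Derivation ℚ (MvPolynomial (Fin 3) ℚ) (MvPolynomial (Fin 3) ℚ) :=
  MvPolynomial.mkDerivation ℚ ![X 1 * X 2, X 0 * X 2, X 0 * X 1]

/-- The operator `p ↦ x * D p`. -/
noncomputable def xD : MvPolynomial (Fin 3) ℚ → MvPolynomial (Fin 3) ℚ :=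
  fun p => X 0 * Dum p

/-- `aC n i j` is the coefficient `a_{n,i,j}` of `(xD)^n(x)`:
for even `n`, the coefficient of `x^(2i+1) y^(2j) z^(2n-2i-2j)`;
for odd `n`, the coefficient of `x^(2i+1) y^(2j+1) z^(2n-1-2i-2j)`.
Coefficients with negative indices are `0`. -/
noncomputable def aC (n : ℕ) (i j : ℤ) : ℚ :=
  if 0 ≤ i ∧ 0 ≤ j then
    MvPolynomial.coeff
      (Finsupp.single 0 (2*i+1).toNat
        + Finsupp.single 1 ((if Even n then 2*j else 2*j+1).toNat)
        + Finsupp.single 2 ((2*(n:ℤ) - 2*i - 2*j - if Even n then 0 else 1).toNat))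
      (xD^[n] (X 0))
  else 0

lemma Dum_monomial (s : Fin 3 →₀ ℕ) (r : ℚ) :
    Dum (monomial s r) = r • s.sum fun i k =>
      monomial (s - Finsupp.single i 1) (k : ℚ) •
        (![X 1 * X 2, X 0 * X 2, X 0 * X 1] i : MvPolynomial (Fin 3) ℚ) := by
  unfold Dum
  exact mkDerivation_monomial (R := ℚ) ![X 1 * X 2, X 0 * X 2, X 0 * X 1] s r

lemma deg3 (m : Fin 3 →₀ ℕ) : m.degree = m 0 + m 1 + m 2 := by
  have h : m.degree = ∑ i : Fin 3, m i := by
    refine Finset.sum_subset (Finset.subset_univ _) ?_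
    intro i _ h
    simpa using Finsupp.notMem_support_iff.mp h
  rw [h, Fin.sum_univ_three]

lemma eval_one_f (i : Fin 3) :
    eval (fun _ => (1:ℚ)) (![X 1 * X 2, X 0 * X 2, X 0 * X 1] i : MvPolynomial (Fin 3) ℚ) = 1 := by
  fin_cases i <;> simp

lemma hom_f (i : Fin 3) :
    (![X 1 * X 2, X 0 * X 2, X 0 * X 1] i : MvPolynomial (Fin 3) ℚ).IsHomogeneous 2 := by
  fin_cases i <;> exact (isHomogeneous_X ℚ _).mul (isHomogeneous_X ℚ _)

lemma degree_of_mem_support {p : MvPolynomial (Fin 3) ℚ} {d : ℕ} (hp : p.IsHomogeneous d)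
    {s : Fin 3 →₀ ℕ} (hs : s ∈ p.support) : s.degree = d := by
  by_contra h
  exact (MvPolynomial.mem_support_iff.mp hs) (hp.coeff_eq_zero h)

lemma eval_one_Dum {p : MvPolynomial (Fin 3) ℚ} {d : ℕ} (hp : p.IsHomogeneous d) :
    eval (fun _ => (1:ℚ)) (Dum p) = d * eval (fun _ => 1) p := by
  conv_lhs => rw [p.as_sum]
  have hsum : Dum (∑ v ∈ p.support, monomial v (coeff v p))
      = ∑ v ∈ p.support, Dum (monomial v (coeff v p)) := map_sum Dum.toLinearMap _ _
  rw [hsum, map_sum, eval_eq, Finset.mul_sum]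
  refine Finset.sum_congr rfl fun s hs => ?_
  rw [Dum_monomial, smul_eq_C_mul, map_mul, eval_C, Finsupp.sum, map_sum]
  have hterm : ∀ i ∈ s.support, eval (fun _ => (1:ℚ))
      (monomial (s - Finsupp.single i 1) (s i : ℚ) •
        (![X 1 * X 2, X 0 * X 2, X 0 * X 1] i : MvPolynomial (Fin 3) ℚ))
      = (s i : ℚ) := by
    intro i _
    rw [smul_eq_mul, map_mul, eval_one_f, eval_monomial]
    simp [Finsupp.prod]
  rw [Finset.sum_congr rfl hterm]
  have hdeg : ∑ i ∈ s.support, (s i : ℚ) = (d : ℚ) := by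
    rw [← Nat.cast_sum]
    norm_cast
    exact degree_of_mem_support hp hs
  rw [hdeg]
  simp [mul_comm]

lemma hom_Dum {p : MvPolynomial (Fin 3) ℚ} {d : ℕ} (hp : p.IsHomogeneous d) :
    (Dum p).IsHomogeneous (d + 1) := by
  conv_lhs => rw [p.as_sum]
  have hsum : Dum (∑ v ∈ p.support, monomial v (coeff v p))
      = ∑ v ∈ p.support, Dum (monomial v (coeff v p)) := map_sum Dum.toLinearMap _ _
  rw [hsum]
  refine IsHomogeneous.sum _ _ _ fun s hs => ?_
  rw [Dum_monomial, smul_eq_C_mul]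
  refine IsHomogeneous.C_mul ?_ _
  rw [Finsupp.sum]
  refine IsHomogeneous.sum _ _ _ fun i hi => ?_
  rw [smul_eq_mul]
  have hsi : 1 ≤ s i := Nat.one_le_iff_ne_zero.mpr (Finsupp.mem_support_iff.mp hi)
  have hsd : s.degree = d := degree_of_mem_support hp hs
  have hd1 : 1 ≤ d := le_trans hsi ((Finsupp.le_degree i s).trans_eq hsd)
  have h1 : (s - Finsupp.single i 1).degree = d - 1 := by
    rw [deg3] at hsd ⊢
    simp only [Finsupp.tsub_apply]
    fin_cases i <;> simp [Finsupp.single_apply] at hsi hsd ⊢ <;> omega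
  have := (isHomogeneous_monomial ((s i : ℚ)) h1).mul (hom_f i)
  rwa [show d - 1 + 2 = d + 1 from by omega] at this

noncomputable def Aut0 : MvPolynomial (Fin 3) ℚ →ₐ[ℚ] MvPolynomial (Fin 3) ℚ :=
  aeval ![-X 0, X 1, X 2]

noncomputable def Aut1 : MvPolynomial (Fin 3) ℚ →ₐ[ℚ] MvPolynomial (Fin 3) ℚ :=
  aeval ![X 0, -X 1, X 2]

lemma Aut0_monomial (s : Fin 3 →₀ ℕ) (c : ℚ) :
    Aut0 (monomial s c) = monomial s ((-1)^(s 0) * c) := by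
  rw [Aut0, aeval_monomial, monomial_eq,
    Finsupp.prod_fintype _ _ (fun i => pow_zero _),
    Finsupp.prod_fintype _ _ (fun i => pow_zero _),
    Fin.prod_univ_three, Fin.prod_univ_three]
  simp only [Matrix.cons_val_zero, Matrix.cons_val_one, Matrix.head_cons, Matrix.cons_val_two,
    Matrix.tail_cons, algebraMap_eq]
  rw [neg_pow]
  simp only [map_mul, map_pow, map_neg, map_one]
  ring

lemma Aut1_monomial (s : Fin 3 →₀ ℕ) (c : ℚ) :
    Aut1 (monomial s c) = monomial s ((-1)^(s 1) * c) := by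
  rw [Aut1, aeval_monomial, monomial_eq,
    Finsupp.prod_fintype _ _ (fun i => pow_zero _),
    Finsupp.prod_fintype _ _ (fun i => pow_zero _),
    Fin.prod_univ_three, Fin.prod_univ_three]
  simp only [Matrix.cons_val_zero, Matrix.cons_val_one, Matrix.head_cons, Matrix.cons_val_two,
    Matrix.tail_cons, algebraMap_eq]
  rw [neg_pow]
  simp only [map_mul, map_pow, map_neg, map_one]
  ring

lemma coeff_Aut0 (p : MvPolynomial (Fin 3) ℚ) (m : Fin 3 →₀ ℕ) :
    coeff m (Aut0 p) = (-1)^(m 0) * coeff m p := by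
  induction p using MvPolynomial.induction_on' with
  | monomial s c =>
    rw [Aut0_monomial, coeff_monomial, coeff_monomial]
    split_ifs with h
    · subst h; rfl
    · ring
  | add p q hp hq => simp only [map_add, coeff_add, hp, hq]; ring

lemma coeff_Aut1 (p : MvPolynomial (Fin 3) ℚ) (m : Fin 3 →₀ ℕ) :
    coeff m (Aut1 p) = (-1)^(m 1) * coeff m p := by
  induction p using MvPolynomial.induction_on' with
  | monomial s c =>
    rw [Aut1_monomial, coeff_monomial, coeff_monomial]
    split_ifs with h
    · subst h; rfl
    · ring
  | add p q hp hq => simp only [map_add, coeff_add, hp, hq]; ring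

lemma Dum_X (i : Fin 3) :
    Dum (X i) = (![X 1 * X 2, X 0 * X 2, X 0 * X 1] i : MvPolynomial (Fin 3) ℚ) := by
  unfold Dum
  exact mkDerivation_X _ _ _

lemma Aut0_Dum (p : MvPolynomial (Fin 3) ℚ) : Aut0 (Dum p) = - Dum (Aut0 p) := by
  induction p using MvPolynomial.induction_on with
  | C c => simp [derivation_C, Aut0]
  | add p q hp hq => simp only [map_add, hp, hq]; ring
  | mul_X p i hp =>
    have hgen : Aut0 (Dum (X i)) = - Dum (Aut0 (X i)) := by
      fin_cases i <;>
        simp [Dum_X, Aut0, aeval_X, Derivation.map_neg]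
    rw [Derivation.leibniz, smul_eq_mul, smul_eq_mul, map_add, map_mul, map_mul,
      hp, hgen, map_mul, Derivation.leibniz, smul_eq_mul, smul_eq_mul]
    ring

lemma Aut1_Dum (p : MvPolynomial (Fin 3) ℚ) : Aut1 (Dum p) = - Dum (Aut1 p) := by
  induction p using MvPolynomial.induction_on with
  | C c => simp [derivation_C, Aut1]
  | add p q hp hq => simp only [map_add, hp, hq]; ring
  | mul_X p i hp =>
    have hgen : Aut1 (Dum (X i)) = - Dum (Aut1 (X i)) := by
      fin_cases i <;>
        simp [Dum_X, Aut1, aeval_X, Derivation.map_neg]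
    rw [Derivation.leibniz, smul_eq_mul, smul_eq_mul, map_add, map_mul, map_mul,
      hp, hgen, map_mul, Derivation.leibniz, smul_eq_mul, smul_eq_mul]
    ring

lemma Aut0_P (n : ℕ) : Aut0 (xD^[n] (X 0)) = - xD^[n] (X 0) := by
  induction n with
  | zero => simp [Aut0]
  | succ n ih =>
    rw [Function.iterate_succ_apply']
    show Aut0 (X 0 * Dum (xD^[n] (X 0))) = - (X 0 * Dum (xD^[n] (X 0)))
    rw [map_mul, Aut0_Dum, ih, Derivation.map_neg]
    simp [Aut0]

lemma Aut1_P (n : ℕ) : Aut1 (xD^[n] (X 0)) = ((-1 : ℚ)^n) • xD^[n] (X 0) := by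
  induction n with
  | zero => simp [Aut1]
  | succ n ih =>
    rw [Function.iterate_succ_apply']
    show Aut1 (X 0 * Dum (xD^[n] (X 0))) = ((-1:ℚ)^(n+1)) • (X 0 * Dum (xD^[n] (X 0)))
    rw [map_mul, Aut1_Dum, ih, Derivation.map_smul]
    simp [Aut1, smul_eq_C_mul, pow_succ]
    ring

lemma homP (n : ℕ) : (xD^[n] (X 0) : MvPolynomial (Fin 3) ℚ).IsHomogeneous (2*n+1) := by
  induction n with
  | zero => simpa using isHomogeneous_X ℚ (0 : Fin 3)
  | succ n ih =>
    rw [Function.iterate_succ_apply']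
    show (X 0 * Dum (xD^[n] (X 0)) : MvPolynomial (Fin 3) ℚ).IsHomogeneous (2*(n+1)+1)
    have := (isHomogeneous_X ℚ (0 : Fin 3)).mul (hom_Dum ih)
    rwa [show 1 + (2*n+1+1) = 2*(n+1)+1 from by omega] at this

lemma parP {n : ℕ} {m : Fin 3 →₀ ℕ} (h : coeff m (xD^[n] (X 0) : MvPolynomial (Fin 3) ℚ) ≠ 0) :
    m 0 % 2 = 1 ∧ m 1 % 2 = n % 2 := by
  set c := coeff m (xD^[n] (X 0) : MvPolynomial (Fin 3) ℚ) with hc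
  have h0 : ((-1:ℚ))^(m 0) * c = -c := by
    rw [← coeff_Aut0, Aut0_P, coeff_neg]
  have h1 : ((-1:ℚ))^(m 1) * c = (-1:ℚ)^n * c := by
    rw [← coeff_Aut1, Aut1_P, coeff_smul, smul_eq_mul]
  constructor
  · rcases Nat.even_or_odd (m 0) with he | ho
    · exfalso
      rw [he.neg_one_pow, one_mul] at h0
      exact h (by linarith)
    · exact Nat.odd_iff.mp ho
  · rcases Nat.even_or_odd (m 1) with he | ho <;> rcases Nat.even_or_odd n with hn | hn
    · rw [Nat.even_iff] at he hn; omega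
    · exfalso
      rw [he.neg_one_pow, one_mul, hn.neg_one_pow, neg_one_mul] at h1
      exact h (by linarith)
    · exfalso
      rw [ho.neg_one_pow, neg_one_mul, hn.neg_one_pow, one_mul] at h1
      exact h (by linarith)
    · rw [Nat.odd_iff] at ho hn; omega

lemma evalP (n : ℕ) :
    eval (fun _ => (1:ℚ)) (xD^[n] (X 0) : MvPolynomial (Fin 3) ℚ)
      = ((2*n-1).doubleFactorial : ℚ) := by
  induction n with
  | zero => simp [Nat.doubleFactorial]
  | succ n ih =>
    rw [Function.iterate_succ_apply']
    show eval (fun _ => (1:ℚ)) (X 0 * Dum (xD^[n] (X 0)) : MvPolynomial (Fin 3) ℚ) = _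
    rw [map_mul, eval_X, one_mul, eval_one_Dum (homP n), ih]
    have key : (2*(n+1)-1).doubleFactorial = (2*n+1) * (2*n-1).doubleFactorial := by
      cases n with
      | zero => decide
      | succ m =>
        have h2 : 2*(m+1+1)-1 = (2*(m+1)-1)+2 := by omega
        rw [h2, Nat.doubleFactorial_add_two]
        congr 1
    rw [key]
    push_cast
    ring

noncomputable def eV (n i j : ℕ) : Fin 3 →₀ ℕ :=
  Finsupp.single 0 (2*i+1) + Finsupp.single 1 (if Even n then 2*j else 2*j+1)
    + Finsupp.single 2 ((2*n+1) - (2*i+1) - (if Even n then 2*j else 2*j+1))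

lemma eV_apply0 (n i j : ℕ) : eV n i j 0 = 2*i+1 := by
  simp [eV, Finsupp.single_apply]

lemma eV_apply1 (n i j : ℕ) : eV n i j 1 = if Even n then 2*j else 2*j+1 := by
  simp [eV, Finsupp.single_apply]

lemma eV_apply2 (n i j : ℕ) :
    eV n i j 2 = (2*n+1) - (2*i+1) - (if Even n then 2*j else 2*j+1) := by
  simp [eV, Finsupp.single_apply]

lemma aC_eq (n i j : ℕ) : aC n (i:ℤ) (j:ℤ) = coeff (eV n i j) (xD^[n] (X 0)) := by
  have h1 : (2*(i:ℤ)+1).toNat = 2*i+1 := by omega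
  have h2 : ((if Even n then 2*(j:ℤ) else 2*(j:ℤ)+1)).toNat
      = (if Even n then 2*j else 2*j+1) := by split_ifs <;> omega
  have h3 : (2*(n:ℤ) - 2*(i:ℤ) - 2*(j:ℤ) - if Even n then 0 else 1).toNat
      = (2*n+1) - (2*i+1) - (if Even n then 2*j else 2*j+1) := by split_ifs <;> omega
  unfold aC
  rw [if_pos ⟨Int.natCast_nonneg i, Int.natCast_nonneg j⟩, h1, h2, h3]
  rfl

theorem stmt2 (n : ℕ) (hn : 1 ≤ n) :
    ∑ i ∈ Finset.range (n+1), ∑ j ∈ Finset.range (n+1), aC n (i:ℤ) (j:ℤ)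
      = ((2*n-1).doubleFactorial : ℚ) := by
  have step1 : ∑ i ∈ Finset.range (n+1), ∑ j ∈ Finset.range (n+1), aC n (i:ℤ) (j:ℤ)
      = ∑ q ∈ (Finset.range (n+1)) ×ˢ (Finset.range (n+1)),
          coeff (eV n q.1 q.2) (xD^[n] (X 0)) := by
    rw [Finset.sum_product]
    exact Finset.sum_congr rfl fun i _ => Finset.sum_congr rfl fun j _ => aC_eq n i j
  have hinj : ∀ a ∈ (Finset.range (n+1)) ×ˢ (Finset.range (n+1)),
      ∀ b ∈ (Finset.range (n+1)) ×ˢ (Finset.range (n+1)),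
      (fun q : ℕ × ℕ => eV n q.1 q.2) a = (fun q : ℕ × ℕ => eV n q.1 q.2) b → a = b := by
    intro a _ b _ hab
    have h0 := congrArg (fun f : Fin 3 →₀ ℕ => f 0) hab
    have h1 := congrArg (fun f : Fin 3 →₀ ℕ => f 1) hab
    simp only [eV_apply0, eV_apply1] at h0 h1
    have e1 : a.1 = b.1 := by omega
    have e2 : a.2 = b.2 := by split_ifs at h1 <;> omega
    exact Prod.ext e1 e2
  have step2 : ∑ q ∈ (Finset.range (n+1)) ×ˢ (Finset.range (n+1)),
      coeff (eV n q.1 q.2) (xD^[n] (X 0))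
      = ∑ m ∈ ((Finset.range (n+1)) ×ˢ (Finset.range (n+1))).image
          (fun q : ℕ × ℕ => eV n q.1 q.2), coeff m (xD^[n] (X 0)) :=
    (Finset.sum_image hinj).symm
  have hsub : (xD^[n] (X 0) : MvPolynomial (Fin 3) ℚ).support
      ⊆ ((Finset.range (n+1)) ×ˢ (Finset.range (n+1))).image
          (fun q : ℕ × ℕ => eV n q.1 q.2) := by
    intro m hm
    have hc : coeff m (xD^[n] (X 0) : MvPolynomial (Fin 3) ℚ) ≠ 0 :=
      MvPolynomial.mem_support_iff.mp hm
    obtain ⟨hp0, hp1⟩ := parP hc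
    have hdeg : m 0 + m 1 + m 2 = 2*n+1 := by
      rw [← deg3]; exact degree_of_mem_support (homP n) hm
    refine Finset.mem_image.mpr ⟨(m 0 / 2, m 1 / 2), ?_, ?_⟩
    · refine Finset.mem_product.mpr ⟨Finset.mem_range.mpr ?_, Finset.mem_range.mpr ?_⟩ <;> omega
    · have hev : Even n ↔ n % 2 = 0 := Nat.even_iff
      ext a
      fin_cases a
      · show eV n (m 0 / 2) (m 1 / 2) 0 = m 0
        rw [eV_apply0]; omega
      · show eV n (m 0 / 2) (m 1 / 2) 1 = m 1
        rw [eV_apply1]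
        split_ifs with h
        · rw [hev] at h; omega
        · rw [hev] at h; omega
      · show eV n (m 0 / 2) (m 1 / 2) 2 = m 2
        rw [eV_apply2]
        split_ifs with h
        · rw [hev] at h; omega
        · rw [hev] at h; omega
  have step3 : ∑ m ∈ ((Finset.range (n+1)) ×ˢ (Finset.range (n+1))).image
          (fun q : ℕ × ℕ => eV n q.1 q.2), coeff m (xD^[n] (X 0))
      = ∑ m ∈ (xD^[n] (X 0) : MvPolynomial (Fin 3) ℚ).support, coeff m (xD^[n] (X 0)) :=
    (Finset.sum_subset hsub fun m _ hm => by
      simpa using MvPolynomial.notMem_support_iff.mp hm).symm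
  have step4 : ∑ m ∈ (xD^[n] (X 0) : MvPolynomial (Fin 3) ℚ).support, coeff m (xD^[n] (X 0))
      = eval (fun _ => (1:ℚ)) (xD^[n] (X 0)) := by
    rw [eval_eq]
    exact Finset.sum_congr rfl fun m _ => by simp [Finsupp.prod]
  rw [step1, step2, step3, step4, evalP]
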